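/- In any ε-chain in a compact metric space X of length n ≥ 2·pack_ε(X), there exist indices i < j with j − i > 1 and |xᵢ xⱼ| ≤ ε; consequently any ε-chain can be shortened to one with fewer than 2·pack_ε(X) steps without increasing ∑ |f(x_{i-1}) f(xᵢ)| for any map f into a metric space. -/

import Mathlib

open Filter
open scoped ENNReal

section PullDefs
variable {X Y : Type*} [MetricSpace X] [MetricSpace Y]

/-- `c 0, …, c n` is an `ε`-chain from `x` to `x'`. -/
def IsEpsChain (ε : ℝ) (n : ℕ) (c : ℕ → X) (x x' : X) : Prop :=
  c 0 = x ∧ c n = x' ∧ ∀ i < n, dist (c i) (c (i + 1)) ≤ ε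

/-- `pull_{f,ε}(x,x')`: infimum over `ε`-chains of the sum of image distances. -/
noncomputable def pullEps (f : X → Y) (ε : ℝ) (x x' : X) : ℝ≥0∞ :=
  ⨅ (n : ℕ) (c : ℕ → X) (_ : IsEpsChain ε n c x x'),
    ∑ i ∈ Finset.range n, edist (f (c i)) (f (c (i + 1)))

/-- `pull_f(x,x') = lim_{ε→0+} pull_{f,ε}(x,x') = sup_{ε>0} pull_{f,ε}(x,x')`. -/
noncomputable def pullMet (f : X → Y) (x x' : X) : ℝ≥0∞ :=
  ⨆ (ε : ℝ) (_ : 0 < ε), pullEps f ε x x'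

/-- `f` is an intrinsic isometry if the pulled-back metric coincides with the metric of `X`. -/
def IsIntrinsicIsometry (f : X → Y) : Prop :=
  Continuous f ∧ ∀ x x', edist x x' = pullMet f x x'

end PullDefs

/-- `pack_ε(X)`: maximal number of points at pairwise distance `> ε`. -/
noncomputable def packNum (X : Type*) [MetricSpace X] (ε : ℝ) : ℕ :=
  sSup {n | ∃ s : Finset X, s.card = n ∧ ∀ x ∈ s, ∀ y ∈ s, x ≠ y → ε < dist x y}

/-- Bounded packing numbers in a compact space. -/
lemma packBdd {X : Type*} [MetricSpace X] [CompactSpace X] {ε : ℝ} (hε : 0 < ε) :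
    BddAbove {n | ∃ s : Finset X, s.card = n ∧ ∀ x ∈ s, ∀ y ∈ s, x ≠ y → ε < dist x y} := by
  obtain ⟨t, htf, hcov⟩ := Metric.totallyBounded_iff.1 (isCompact_univ : IsCompact (Set.univ : Set X)).totallyBounded (ε/2)
    (by linarith)
  refine ⟨htf.toFinset.card, ?_⟩
  rintro n ⟨s, rfl, hs⟩
  have hg : ∀ x : X, ∃ y ∈ htf.toFinset, dist x y < ε / 2 := by
    intro x
    have := hcov (Set.mem_univ x)
    simp only [Set.mem_iUnion, Metric.mem_ball] at this
    obtain ⟨y, hy, hxy⟩ := this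
    exact ⟨y, htf.mem_toFinset.2 hy, hxy⟩
  choose g hg1 hg2 using hg
  apply Finset.card_le_card_of_injOn g (fun x _ => hg1 x)
  intro x hx y hy hxy
  by_contra hne
  have := hs x hx y hy hne
  have : dist x y ≤ dist x (g x) + dist (g y) y := by
    rw [hxy]; exact dist_triangle _ _ _
  rw [dist_comm (g y) y] at this
  linarith [hg2 x, hg2 y]

lemma packNum_pos {X : Type*} [MetricSpace X] [CompactSpace X] {ε : ℝ} (hε : 0 < ε)
    (x : X) : 1 ≤ packNum X ε := by
  apply le_csSup (packBdd hε)
  exact ⟨{x}, Finset.card_singleton x, by simp⟩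

/-- Part 1: shortcut existence. -/
lemma shortcut {X : Type*} [MetricSpace X] [DecidableEq X] [CompactSpace X] {ε : ℝ} (hε : 0 < ε)
    {n : ℕ} {c : ℕ → X} (hc : ∀ i < n, dist (c i) (c (i + 1)) ≤ ε)
    (h2p : 2 * packNum X ε ≤ n) :
    ∃ i j : ℕ, i < j ∧ 1 < j - i ∧ j ≤ n ∧ dist (c i) (c j) ≤ ε := by
  set p := packNum X ε with hp
  by_contra h
  push_neg at h
  -- all points c (2t), t ≤ p, are pairwise at distance > ε
  have key : ∀ t ≤ p, ∀ s ≤ p, t ≠ s → ε < dist (c (2*t)) (c (2*s)) := by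
    have key' : ∀ t s, t < s → s ≤ p → ε < dist (c (2*t)) (c (2*s)) := by
      intro t s hts hsp
      by_contra hle
      push_neg at hle
      have := h (2*t) (2*s) (by omega) (by omega) (by omega)
      exact absurd hle (not_le.2 this)
    intro t ht s hs hne
    rcases lt_or_gt_of_ne hne with h1 | h1
    · exact key' t s h1 hs
    · rw [dist_comm]; exact key' s t h1 ht
  have hinj : Set.InjOn (fun t => c (2*t)) (Finset.range (p+1)) := by
    intro t ht s hs hts
    simp only [Finset.coe_range, Set.mem_Iio] at ht hs
    by_contra hne
    have := key t (by omega) s (by omega) hne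
    simp only at hts
    rw [hts] at this
    simp at this
    linarith
  have hcard : ((Finset.range (p+1)).image (fun t => c (2*t))).card = p + 1 := by
    rw [Finset.card_image_of_injOn hinj, Finset.card_range]
  have hmem : p + 1 ∈ {n | ∃ s : Finset X, s.card = n ∧
      ∀ x ∈ s, ∀ y ∈ s, x ≠ y → ε < dist x y} := by
    refine ⟨_, hcard, ?_⟩
    intro x hx y hy hxy
    simp only [Finset.mem_image, Finset.mem_range] at hx hy
    obtain ⟨t, ht, rfl⟩ := hx
    obtain ⟨s, hs, rfl⟩ := hy
    exact key t (by omega) s (by omega) (fun h' => hxy (by rw [h']))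
  have h2 := le_csSup (packBdd hε) hmem
  rw [← packNum, ← hp] at h2
  omega

lemma shorten {X Y : Type*} [MetricSpace X] [DecidableEq X] [CompactSpace X] [MetricSpace Y]
    (f : X → Y) {ε : ℝ} (hε : 0 < ε) :
    ∀ n : ℕ, ∀ c : ℕ → X, (∀ i < n, dist (c i) (c (i + 1)) ≤ ε) →
    ∃ (m : ℕ) (c' : ℕ → X), c' 0 = c 0 ∧ c' m = c n ∧
      (∀ i < m, dist (c' i) (c' (i + 1)) ≤ ε) ∧ m < 2 * packNum X ε ∧
      ∑ i ∈ Finset.range m, edist (f (c' i)) (f (c' (i + 1))) ≤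
        ∑ i ∈ Finset.range n, edist (f (c i)) (f (c (i + 1))) := by
  intro n
  induction n using Nat.strong_induction_on with
  | _ n IH =>
    intro c hc
    by_cases hn : n < 2 * packNum X ε
    · exact ⟨n, c, rfl, rfl, hc, hn, le_rfl⟩
    · push_neg at hn
      obtain ⟨i, j, hij, hji, hjn, hdij⟩ := shortcut hε hc hn
      set d := j - i with hd
      have hd2 : 2 ≤ d := hji
      have hidj : i + d = j := by omega
      set m' := n + 1 - d with hm'
      have hp1 : 1 ≤ packNum X ε := packNum_pos hε (c 0)
      have hm'n : m' < n := by omega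
      have him' : i < m' := by omega
      set c'' : ℕ → X := fun k => if k ≤ i then c k else c (k - 1 + d) with hc''
      have hchain : ∀ k < m', dist (c'' k) (c'' (k + 1)) ≤ ε := by
        intro k hk
        rcases lt_trichotomy k i with h1 | h1 | h1
        · simp only [hc'', if_pos (le_of_lt h1), if_pos (by omega : k + 1 ≤ i)]
          exact hc k (by omega)
        · simp only [hc'', if_pos h1.le, if_neg (by omega : ¬ k + 1 ≤ i)]
          have e : k + 1 - 1 + d = j := by omega
          rw [e, h1]; exact hdij
        · simp only [hc'', if_neg (by omega : ¬ k ≤ i), if_neg (by omega : ¬ k + 1 ≤ i)]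
          have e1 : k + 1 - 1 + d = k - 1 + d + 1 := by omega
          rw [e1]
          exact hc _ (by omega)
      have h0 : c'' 0 = c 0 := by simp [hc'']
      have hend : c'' m' = c n := by
        simp only [hc'', if_neg (by omega : ¬ m' ≤ i)]
        congr 1; omega
      have hsum : ∑ k ∈ Finset.range m', edist (f (c'' k)) (f (c'' (k + 1))) ≤
          ∑ k ∈ Finset.range n, edist (f (c k)) (f (c (k + 1))) := by
        have splitL : ∑ k ∈ Finset.range m', edist (f (c'' k)) (f (c'' (k + 1))) =
            (∑ k ∈ Finset.range i, edist (f (c'' k)) (f (c'' (k + 1)))) +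
            edist (f (c'' i)) (f (c'' (i + 1))) +
            ∑ k ∈ Finset.Ico (i+1) m', edist (f (c'' k)) (f (c'' (k + 1))) := by
          rw [← Finset.sum_range_succ]
          exact (Finset.sum_range_add_sum_Ico _ (by omega)).symm
        have eA : ∑ k ∈ Finset.range i, edist (f (c'' k)) (f (c'' (k + 1))) =
            ∑ k ∈ Finset.range i, edist (f (c k)) (f (c (k + 1))) := by
          refine Finset.sum_congr rfl fun k hk => ?_
          simp only [Finset.mem_range] at hk
          simp only [hc'', if_pos (by omega : k ≤ i), if_pos (by omega : k + 1 ≤ i)]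
        have eMid : edist (f (c'' i)) (f (c'' (i + 1))) = edist (f (c i)) (f (c j)) := by
          simp only [hc'', if_pos le_rfl, if_neg (by omega : ¬ i + 1 ≤ i)]
          have e : i + 1 - 1 + d = j := by omega
          rw [e]
        have eC : ∑ k ∈ Finset.Ico (i+1) m', edist (f (c'' k)) (f (c'' (k + 1))) =
            ∑ k ∈ Finset.Ico j n, edist (f (c k)) (f (c (k + 1))) := by
          rw [Finset.sum_Ico_eq_sum_range, Finset.sum_Ico_eq_sum_range]
          have hcard : m' - (i + 1) = n - j := by omega
          rw [hcard]
          refine Finset.sum_congr rfl fun t ht => ?_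
          simp only [Finset.mem_range] at ht
          simp only [hc'', if_neg (by omega : ¬ i + 1 + t ≤ i),
            if_neg (by omega : ¬ i + 1 + t + 1 ≤ i)]
          have e1 : i + 1 + t - 1 + d = j + t := by omega
          have e2 : i + 1 + t + 1 - 1 + d = j + t + 1 := by omega
          rw [e1, e2]
        have splitR : ∑ k ∈ Finset.range n, edist (f (c k)) (f (c (k + 1))) =
            (∑ k ∈ Finset.range i, edist (f (c k)) (f (c (k + 1)))) +
            (∑ k ∈ Finset.Ico i j, edist (f (c k)) (f (c (k + 1)))) +
            ∑ k ∈ Finset.Ico j n, edist (f (c k)) (f (c (k + 1))) := by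
          rw [← Finset.sum_range_add_sum_Ico _ (by omega : i ≤ n),
            ← Finset.sum_Ico_consecutive _ (le_of_lt hij) hjn, add_assoc]
        have hmid : edist (f (c i)) (f (c j)) ≤
            ∑ k ∈ Finset.Ico i j, edist (f (c k)) (f (c (k + 1))) :=
          edist_le_Ico_sum_edist (fun k => f (c k)) (le_of_lt hij)
        rw [splitL, splitR, eA, eMid, eC]
        exact add_le_add_left (add_le_add_right hmid _) _
      obtain ⟨m, c', h0', hend', hchain', hm', hsum'⟩ := IH m' hm'n c'' hchain
      exact ⟨m, c', by rw [h0', h0], by rw [hend', hend], hchain', hm', hsum'.trans hsum⟩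

/-- an `ε`-chain with at least `2·pack_ε(X)` steps has a shortcut
(`i < j`, `j - i > 1`, `dist (c i) (c j) ≤ ε`); consequently any `ε`-chain can be replaced
by one with fewer than `2·pack_ε(X)` steps, without increasing `∑ |f(x_{i-1}) f(x_i)|`. -/
theorem epsChain_shortcut {X Y : Type*} [MetricSpace X] [CompactSpace X] [MetricSpace Y]
    (f : X → Y) (ε : ℝ) (hε : 0 < ε) (n : ℕ) (c : ℕ → X)
    (hc : ∀ i < n, dist (c i) (c (i + 1)) ≤ ε) :
    (2 * packNum X ε ≤ n →
      ∃ i j : ℕ, i < j ∧ 1 < j - i ∧ j ≤ n ∧ dist (c i) (c j) ≤ ε) ∧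
    (∃ (m : ℕ) (c' : ℕ → X), c' 0 = c 0 ∧ c' m = c n ∧
      (∀ i < m, dist (c' i) (c' (i + 1)) ≤ ε) ∧ m < 2 * packNum X ε ∧
      ∑ i ∈ Finset.range m, edist (f (c' i)) (f (c' (i + 1))) ≤
        ∑ i ∈ Finset.range n, edist (f (c i)) (f (c (i + 1)))) := by
  
  classical
  constructor
  · intro h2p
    exact shortcut hε hc h2p
  · exact shorten f hε n c hc
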